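/- Let ℓ_1, …, ℓ_n : ℝ → ℝ be convex, G-Lipschitz loss functions, let x_1, …, x_n ∈ ℝ^d with data matrix X = (x_1, …, x_n) ∈ ℝ^{d×n}, let λ > 0, and define F(w) = (1/n)·Σ_{i=1}^n ℓ_i(wᵀx_i) + (λ/2)‖w‖₂². Let Y ∈ ℝ^{d×m} be any matrix, let P_Y denote the orthogonal projection of ℝ^d onto the column space of Y, let w_n be a global minimizer of F over ℝ^d, and let ŵ_n be a minimizer of F over the column space of Y (i.e., over {w ∈ ℝ^d : P_Y w = w}). Then F(ŵ_n) ≤ F(w_n) + (G²/(2λn))·‖X − P_Y X‖₂². -/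

import Mathlib

open MeasureTheory Matrix Finset

/-- The Euclidean norm of a real vector. -/
noncomputable def euclNorm {d : ℕ} (x : Fin d → ℝ) : ℝ := Real.sqrt (∑ i, x i ^ 2)

/-- The spectral norm (largest singular value) of a real matrix, i.e. its ℓ₂→ℓ₂ operator norm. -/
noncomputable def specNorm {p q : ℕ} (M : Matrix (Fin p) (Fin q) ℝ) : ℝ :=
  ‖LinearMap.toContinuousLinearMap (Matrix.toEuclideanLin M)‖

/-- `P` is the orthogonal projection of `ℝ^d` onto the column space of `Y`. -/
def IsProjOntoColSpace {d m : ℕ} (P : Matrix (Fin d) (Fin d) ℝ)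
    (Y : Matrix (Fin d) (Fin m) ℝ) : Prop :=
  P.IsSymm ∧ P * P = P ∧ LinearMap.range P.mulVecLin = LinearMap.range Y.mulVecLin

/-- `f` is `G`-Lipschitz: `|f z - f z'| ≤ G |z - z'|` for all `z, z'`. -/
def LipschitzCst (G : ℝ) (f : ℝ → ℝ) : Prop := ∀ z z', |f z - f z'| ≤ G * |z - z'|

/-- The Euclidean inner product `wᵀx`. -/
def dotp {d : ℕ} (w x : Fin d → ℝ) : ℝ := ∑ i, w i * x i


lemma euclNorm_eq {p : ℕ} (v : Fin p → ℝ) :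
    euclNorm v = ‖(WithLp.equiv 2 (Fin p → ℝ)).symm v‖ := by
  rw [EuclideanSpace.norm_eq]
  simp [euclNorm, sq_abs]

lemma specNorm_nonneg {p q : ℕ} (M : Matrix (Fin p) (Fin q) ℝ) : 0 ≤ specNorm M :=
  norm_nonneg _

lemma euclNorm_nonneg {p : ℕ} (v : Fin p → ℝ) : 0 ≤ euclNorm v := Real.sqrt_nonneg _

lemma sq_euclNorm {p : ℕ} (v : Fin p → ℝ) : euclNorm v ^ 2 = ∑ i, v i ^ 2 :=
  Real.sq_sqrt (Finset.sum_nonneg fun i _ => sq_nonneg _)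

lemma mulVec_norm_le {p q : ℕ} (M : Matrix (Fin p) (Fin q) ℝ) (v : Fin q → ℝ) :
    euclNorm (M.mulVec v) ≤ specNorm M * euclNorm v := by
  rw [euclNorm_eq, euclNorm_eq]
  have h := (LinearMap.toContinuousLinearMap (Matrix.toEuclideanLin M)).le_opNorm
    ((WithLp.equiv 2 (Fin q → ℝ)).symm v)
  simpa [specNorm] using h

lemma dotp_le {p : ℕ} (a b : Fin p → ℝ) : dotp a b ≤ euclNorm a * euclNorm b := by
  simpa [dotp, euclNorm] using Real.sum_mul_le_sqrt_mul_sqrt Finset.univ a b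

lemma dotp_mulVec {p q : ℕ} (M : Matrix (Fin p) (Fin q) ℝ) (a : Fin p → ℝ) (b : Fin q → ℝ) :
    dotp a (M.mulVec b) = dotp (Mᵀ.mulVec a) b := by
  simp only [dotp, Matrix.mulVec, dotProduct, Matrix.transpose_apply,
    Finset.mul_sum, Finset.sum_mul]
  rw [Finset.sum_comm]
  congr 1; ext i; congr 1; ext j; ring

lemma transpose_mulVec_norm_le {p q : ℕ} (M : Matrix (Fin p) (Fin q) ℝ) (u : Fin p → ℝ) :
    euclNorm (Mᵀ.mulVec u) ≤ specNorm M * euclNorm u := by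
  set w := Mᵀ.mulVec u with hw
  have h1 : euclNorm w ^ 2 = dotp u (M.mulVec w) := by
    rw [dotp_mulVec, sq_euclNorm]
    simp [dotp, sq, ← hw]
  have h2 : dotp u (M.mulVec w) ≤ euclNorm u * (specNorm M * euclNorm w) :=
    (dotp_le _ _).trans (by
      have := mulVec_norm_le M w
      nlinarith [euclNorm_nonneg u])
  rcases eq_or_lt_of_le (euclNorm_nonneg w) with h | h
  · rw [← h]; exact mul_nonneg (specNorm_nonneg M) (euclNorm_nonneg u)
  · nlinarith [h1, h2]

/-- **Lemma 2** of the paper: if `ŵ_n` minimizes the regularized empirical risk `F` over the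
column space of `Y` and `w_n` minimizes `F` over `ℝ^d`, then
`F(ŵ_n) ≤ F(w_n) + G²/(2λn) ‖X − P_Y X‖₂²`. -/
theorem erm_subspace_optimization_error {d n m : ℕ} (hn : 0 < n) (G lam : ℝ) (hlam : 0 < lam)
    (ℓ : Fin n → ℝ → ℝ)
    (hconv : ∀ i, ConvexOn ℝ Set.univ (ℓ i))
    (hlip : ∀ i, LipschitzCst G (ℓ i))
    (x : Fin n → Fin d → ℝ)
    (X : Matrix (Fin d) (Fin n) ℝ) (hX : ∀ i j, X i j = x j i)
    (F : (Fin d → ℝ) → ℝ)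
    (hF : ∀ w, F w = (1 / (n : ℝ)) * ∑ i, ℓ i (dotp w (x i)) + lam / 2 * euclNorm w ^ 2)
    (Y : Matrix (Fin d) (Fin m) ℝ) (Pm : Matrix (Fin d) (Fin d) ℝ)
    (hP : IsProjOntoColSpace Pm Y)
    (wn : Fin d → ℝ) (hwn : ∀ w, F wn ≤ F w)
    (whn : Fin d → ℝ) (hmem : Pm.mulVec whn = whn)
    (hwhn : ∀ w, Pm.mulVec w = w → F whn ≤ F w) :
    F whn ≤ F wn + G ^ 2 / (2 * lam * n) * specNorm (X - Pm * X) ^ 2 := by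
  
  obtain ⟨hsymm, hPP, -⟩ := hP
  have hsymm' : Pmᵀ = Pm := hsymm
  set nR : ℝ := (n : ℝ) with hnRdef
  have hnR : (0 : ℝ) < nR := by rw [hnRdef]; exact Nat.cast_pos.mpr hn
  set wt := Pm.mulVec wn with hwtdef
  set u := wn - wt with hudef
  have hPwt : Pm.mulVec wt = wt := by
    rw [hwtdef, Matrix.mulVec_mulVec, hPP]
  have hPu : Pm.mulVec u = 0 := by
    rw [hudef, Matrix.mulVec_sub, hPwt, hwtdef, sub_self]
  have key : F whn ≤ F wt := hwhn wt hPwt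
  -- orthogonality
  have horth : dotp wt u = 0 := by
    have h1 : dotp wt u = dotp u wt := by simp [dotp, mul_comm]
    rw [h1, hwtdef, dotp_mulVec, hsymm', hPu]
    simp [dotp]
  -- Pythagoras
  have hwn_eq : ∀ i, wn i = wt i + u i := fun i => by simp [hudef]
  have hpyth : ∑ i, wn i ^ 2 = (∑ i, wt i ^ 2) + ∑ i, u i ^ 2 := by
    have : ∑ i, wn i ^ 2 = ∑ i, (wt i ^ 2 + 2 * (wt i * u i) + u i ^ 2) :=
      Finset.sum_congr rfl fun i _ => by rw [hwn_eq i]; ring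
    rw [this, Finset.sum_add_distrib, Finset.sum_add_distrib, ← Finset.mul_sum]
    have : ∑ i, wt i * u i = dotp wt u := rfl
    rw [this, horth]; ring
  set E := X - Pm * X with hEdef
  have hEt : Eᵀ.mulVec u = Xᵀ.mulVec u := by
    rw [hEdef, Matrix.transpose_sub, Matrix.transpose_mul, Matrix.sub_mulVec,
      ← Matrix.mulVec_mulVec, hsymm', hPu, Matrix.mulVec_zero, sub_zero]
  have ha : ∀ i, (Xᵀ.mulVec u) i = dotp u (x i) := fun i => by
    simp [Matrix.mulVec, dotp, dotProduct, hX, mul_comm]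
  -- Lipschitz bound on losses
  have hloss : ∀ i, ℓ i (dotp wt (x i)) ≤ ℓ i (dotp wn (x i)) + G * |dotp u (x i)| := by
    intro i
    have h := hlip i (dotp wt (x i)) (dotp wn (x i))
    have hd : dotp wt (x i) - dotp wn (x i) = -(dotp u (x i)) := by
      simp only [dotp, ← Finset.sum_sub_distrib, ← Finset.sum_neg_distrib]
      exact Finset.sum_congr rfl fun j _ => by rw [hwn_eq j]; ring
    have h2 : ℓ i (dotp wt (x i)) - ℓ i (dotp wn (x i)) ≤ G * |dotp u (x i)| := by
      calc ℓ i (dotp wt (x i)) - ℓ i (dotp wn (x i))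
          ≤ |ℓ i (dotp wt (x i)) - ℓ i (dotp wn (x i))| := le_abs_self _
        _ ≤ G * |dotp wt (x i) - dotp wn (x i)| := h
        _ = G * |dotp u (x i)| := by rw [hd, abs_neg]
    linarith
  have hG : 0 ≤ G := by
    have h := hlip ⟨0, hn⟩ 0 1
    simp at h
    exact le_trans (abs_nonneg _) h
  set s := specNorm E with hsdef
  set t := euclNorm u with htdef
  set sqn := Real.sqrt nR with hsqndef
  have hsqn2 : sqn ^ 2 = nR := Real.sq_sqrt hnR.le
  have hsqn0 : 0 ≤ sqn := Real.sqrt_nonneg _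
  have hs0 : 0 ≤ s := specNorm_nonneg _
  have ht0 : 0 ≤ t := euclNorm_nonneg _
  set A := ∑ i, |dotp u (x i)| with hAdef
  have hsum : A ≤ sqn * (s * t) := by
    have hcs : A ≤ Real.sqrt (∑ _i : Fin n, (1:ℝ) ^ 2) * Real.sqrt (∑ i, |dotp u (x i)| ^ 2) := by
      have := Real.sum_mul_le_sqrt_mul_sqrt Finset.univ (fun _ => (1:ℝ)) (fun i => |dotp u (x i)|)
      simpa [hAdef] using this
    have h1 : Real.sqrt (∑ _i : Fin n, (1:ℝ) ^ 2) = sqn := by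
      simp [hsqndef, hnRdef]
    have h2 : ∑ i, |dotp u (x i)| ^ 2 = euclNorm (Eᵀ.mulVec u) ^ 2 := by
      rw [sq_euclNorm, hEt]
      exact Finset.sum_congr rfl fun i _ => by rw [sq_abs, ha i]
    have h3 : Real.sqrt (∑ i, |dotp u (x i)| ^ 2) = euclNorm (Eᵀ.mulVec u) := by
      rw [h2, Real.sqrt_sq (euclNorm_nonneg _)]
    have h4 : euclNorm (Eᵀ.mulVec u) ≤ s * t := transpose_mulVec_norm_le E u
    rw [h1, h3] at hcs
    exact hcs.trans (by nlinarith)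
  -- key scalar inequality
  have hkey : (1 / nR) * (G * (sqn * (s * t))) ≤ lam / 2 * t ^ 2 + G ^ 2 / (2 * lam * nR) * s ^ 2 := by
    set b := sqn * t with hbdef
    have hb2 : b ^ 2 = nR * t ^ 2 := by rw [hbdef, mul_pow, hsqn2]
    have h1 : (1 / nR) * (G * (sqn * (s * t))) = G * s * b / nR := by rw [hbdef]; ring
    have h2 : G * s * b / nR ≤ (lam ^ 2 * b ^ 2 + G ^ 2 * s ^ 2) / (2 * lam * nR) := by
      rw [div_le_div_iff₀ hnR (by positivity)]
      nlinarith [sq_nonneg (lam * b - G * s)]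
    have h3 : (lam ^ 2 * b ^ 2 + G ^ 2 * s ^ 2) / (2 * lam * nR)
        = lam / 2 * t ^ 2 + G ^ 2 / (2 * lam * nR) * s ^ 2 := by
      rw [hb2]; field_simp
    rw [h1, ← h3]; exact h2
  -- assemble
  have hFwt : F wt ≤ F wn + G ^ 2 / (2 * lam * nR) * s ^ 2 := by
    rw [hF wt, hF wn, sq_euclNorm, sq_euclNorm]
    have hL : ∑ i, ℓ i (dotp wt (x i)) ≤ (∑ i, ℓ i (dotp wn (x i))) + G * A := by
      calc ∑ i, ℓ i (dotp wt (x i))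
          ≤ ∑ i, (ℓ i (dotp wn (x i)) + G * |dotp u (x i)|) :=
            Finset.sum_le_sum fun i _ => hloss i
        _ = (∑ i, ℓ i (dotp wn (x i))) + G * A := by
            rw [Finset.sum_add_distrib, ← Finset.mul_sum]
    have hSt : ∑ i, u i ^ 2 = t ^ 2 := (sq_euclNorm u).symm
    have hmul : (1 / nR) * (∑ i, ℓ i (dotp wt (x i)))
        ≤ (1 / nR) * ((∑ i, ℓ i (dotp wn (x i))) + G * A) :=
      mul_le_mul_of_nonneg_left hL (by positivity)
    have hGA : (1 / nR) * (G * A) ≤ (1 / nR) * (G * (sqn * (s * t))) :=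
      mul_le_mul_of_nonneg_left (mul_le_mul_of_nonneg_left hsum hG) (by positivity)
    have hdist : (1 / nR) * ((∑ i, ℓ i (dotp wn (x i))) + G * A)
        = (1 / nR) * (∑ i, ℓ i (dotp wn (x i))) + (1 / nR) * (G * A) := mul_add _ _ _
    have hSwt : ∑ i, wt i ^ 2 = (∑ i, wn i ^ 2) - t ^ 2 := by rw [← hSt]; linarith [hpyth]
    have h5 : lam / 2 * (∑ i, wt i ^ 2) = lam / 2 * (∑ i, wn i ^ 2) - lam / 2 * t ^ 2 := by
      rw [hSwt]; ring
    linarith [hkey, hmul, hGA, hdist, h5]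
  exact key.trans hFwt
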